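/- arXiv:1712.08635 — 2 statements merged into one kernel-verified Lean document; each statement's English description precedes it below -/
import Mathlib

section
/- Let W ∈ L⁴(𝕋²) with ‖W‖_{L⁴} > 0. If w ∈ L²(𝕋²) satisfies −Δw = λw for some λ and Ww = 0 almost everywhere, then w = 0. Consequently the space N = {u ∈ L²(𝕋²) : W e^{itΔ}u ≡ 0 on (0,T)×𝕋²} is trivial, provided N is invariant under Δ and every nontrivial closed Δ-invariant subspace of L² contains an eigenfunction. -/
open MeasureTheory Filter Topology

noncomputable section

abbrev 𝕋 := AddCircle (2 * Real.pi)

instance : Fact (0 < 2 * Real.pi) := ⟨by positivity⟩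

abbrev 𝕋2 := 𝕋 × 𝕋

def char (n : ℤ × ℤ) (z : 𝕋2) : ℂ := fourier n.1 z.1 * fourier n.2 z.2


/-- `w` is an eigenfunction of `-Δ` on `𝕋²` with eigenvalue `lam`: a.e. equal to a
trigonometric polynomial whose frequencies `n` satisfy `|n|² = lam`. -/
def IsEig (lam : ℝ) (w : 𝕋2 → ℂ) : Prop :=
  ∃ F : Finset (ℤ × ℤ), ∃ c : ℤ × ℤ → ℂ,
    (∀ n ∈ F, ((n.1 : ℝ) ^ 2 + (n.2 : ℝ) ^ 2 = lam ∧ c n ≠ 0)) ∧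
      ∀ᵐ z ∂volume, w z = ∑ n ∈ F, c n * char n z

/- ### Auxiliary lemmas -/

instance : Filter.NeBot (𝓝[≠] (0 : 𝕋)) := by
  rw [← mem_closure_iff_nhdsWithin_neBot]
  have h1 : Tendsto (fun n : ℕ => (Real.pi / (n + 1) : ℝ)) atTop (𝓝 0) := by
    have := tendsto_one_div_add_atTop_nhds_zero_nat (𝕜 := ℝ)
    have h2 := this.const_mul Real.pi
    simpa [div_eq_mul_inv, mul_comm, mul_one_div] using h2
  have hcont : Continuous ((↑) : ℝ → 𝕋) := AddCircle.continuous_mk' _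
  have htend : Tendsto (fun n : ℕ => ((Real.pi / (n + 1) : ℝ) : 𝕋)) atTop (𝓝 0) := by
    have := (hcont.tendsto 0).comp h1
    exact this
  refine mem_closure_of_tendsto htend (Filter.Eventually.of_forall fun n => ?_)
  simp only [Set.mem_compl_iff, Set.mem_singleton_iff]
  have hpos : (0:ℝ) < Real.pi / (n + 1) := by positivity
  have hlt : Real.pi / (n + 1) < 2 * Real.pi := by
    have h1 : Real.pi / (n + 1) ≤ Real.pi := by
      rw [div_le_iff₀ (by positivity)]
      nlinarith [Real.pi_pos]
    nlinarith [Real.pi_pos]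
  rw [AddCircle.coe_eq_zero_iff_of_mem_Ico ⟨hpos.le, hlt⟩]
  exact hpos.ne'

instance : NullSingletonClass (volume : Measure 𝕋) := Measure.IsAddHaarMeasure.nullSingletonClass _

lemma fourier_ne_zero' (n : ℤ) (x : 𝕋) : (fourier n x : ℂ) ≠ 0 := by
  rw [fourier_apply]; exact Circle.coe_ne_zero _

lemma fourier_zpow' (n : ℤ) (x : 𝕋) : (fourier n x : ℂ) = (fourier 1 x : ℂ) ^ n := by
  have hne : (fourier 1 x : ℂ) ≠ 0 := fourier_ne_zero' 1 x
  have hinv : (fourier (-1 : ℤ) x : ℂ) = (fourier 1 x : ℂ)⁻¹ := by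
    have h : (fourier ((0 : ℤ)) x : ℂ) = fourier (-1 : ℤ) x * fourier 1 x := by
      rw [show (0 : ℤ) = -1 + 1 by norm_num]
      exact fourier_add
    rw [fourier_zero] at h
    exact eq_inv_of_mul_eq_one_left h.symm
  induction n using Int.induction_on with
  | zero => simp
  | succ k ih =>
    have h : (fourier ((k : ℤ) + 1) x : ℂ) = fourier (k : ℤ) x * fourier 1 x := fourier_add
    rw [h, ih, zpow_add_one₀ hne]
  | pred k ih =>
    have h : (fourier ((-(k : ℤ)) + (-1)) x : ℂ) = fourier (-(k : ℤ)) x * fourier (-1 : ℤ) x :=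
      fourier_add
    have : (-(k : ℤ) - 1) = (-(k : ℤ)) + (-1) := by ring
    rw [this, h, ih, hinv, zpow_add₀ hne, zpow_neg_one]

lemma fourier_one_inj : Function.Injective (fun x : 𝕋 => (fourier 1 x : ℂ)) := by
  intro x y h
  simp only [fourier_one] at h
  exact AddCircle.injective_toCircle (by positivity) (Subtype.ext h)

/-- A 1-D trigonometric polynomial with a nonzero coefficient vanishes only on a null set. -/
lemma trig1d (F : Finset ℤ) (c : ℤ → ℂ) (k₀ : ℤ) (hk : k₀ ∈ F) (hc : c k₀ ≠ 0) :
    volume {x : 𝕋 | ∑ k ∈ F, c k * fourier k x = 0} = 0 := by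
  classical
  set M : ℕ := F.sup fun k => (-k).toNat with hM
  have hM' : ∀ k ∈ F, (0 : ℤ) ≤ k + M := by
    intro k hkF
    have h1 : ((-k).toNat : ℤ) ≤ (M : ℤ) := by
      exact_mod_cast Finset.le_sup (f := fun k => (-k).toNat) hkF
    have h2 : -k ≤ ((-k).toNat : ℤ) := Int.self_le_toNat _
    omega
  set e : ℤ → ℕ := fun k => (k + M).toNat with he
  have hecast : ∀ k ∈ F, ((e k : ℤ)) = k + M := fun k hkF => Int.toNat_of_nonneg (hM' k hkF)
  set Q : Polynomial ℂ := ∑ k ∈ F, Polynomial.C (c k) * Polynomial.X ^ e k with hQdef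
  have hQcoeff : Q.coeff (e k₀) = c k₀ := by
    rw [hQdef, Polynomial.finset_sum_coeff]
    rw [Finset.sum_eq_single k₀]
    · simp [Polynomial.coeff_C_mul, Polynomial.coeff_X_pow]
    · intro k hkF hne
      have hek : e k ≠ e k₀ := by
        intro h
        have h1 := hecast k hkF
        have h2 := hecast k₀ hk
        omega
      simp [Polynomial.coeff_C_mul, Polynomial.coeff_X_pow, hek, Ne.symm hek]
    · intro h; exact absurd hk h
  have hQ0 : Q ≠ 0 := fun h => hc (by rw [← hQcoeff, h, Polynomial.coeff_zero])
  have hsub : {x : 𝕋 | ∑ k ∈ F, c k * fourier k x = 0} ⊆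
      (fun x : 𝕋 => (fourier 1 x : ℂ)) ⁻¹' {z | Q.IsRoot z} := by
    intro x hx
    simp only [Set.mem_setOf_eq] at hx
    simp only [Set.mem_preimage, Set.mem_setOf_eq]
    have hw : (fourier 1 x : ℂ) ≠ 0 := fourier_ne_zero' 1 x
    have heval : Q.eval (fourier 1 x) =
        (∑ k ∈ F, c k * fourier k x) * (fourier 1 x : ℂ) ^ (M : ℤ) := by
      rw [hQdef, Polynomial.eval_finset_sum, Finset.sum_mul]
      refine Finset.sum_congr rfl fun k hkF => ?_
      rw [Polynomial.eval_mul, Polynomial.eval_C, Polynomial.eval_pow, Polynomial.eval_X]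
      rw [fourier_zpow' k x, mul_assoc, ← zpow_add₀ hw, ← zpow_natCast (fourier 1 x : ℂ) (e k),
        hecast k hkF]
    rw [Polynomial.IsRoot, heval, hx, zero_mul]
  refine measure_mono_null hsub ?_
  exact ((Polynomial.finite_setOf_isRoot hQ0).preimage fourier_one_inj.injOn).measure_zero _

/-- A 2-D trigonometric polynomial with a nonzero coefficient vanishes only on a null set. -/
lemma trig2d (F : Finset (ℤ × ℤ)) (c : ℤ × ℤ → ℂ) (n₀ : ℤ × ℤ) (hn : n₀ ∈ F) (hc : c n₀ ≠ 0) :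
    volume {z : 𝕋2 | ∑ n ∈ F, c n * char n z = 0} = 0 := by
  classical
  set P : 𝕋2 → ℂ := fun z => ∑ n ∈ F, c n * char n z with hP
  have hPcont : Continuous P := by
    apply continuous_finset_sum
    intro n _
    exact continuous_const.mul
      (((fourier n.1).continuous.comp continuous_fst).mul
        ((fourier n.2).continuous.comp continuous_snd))
  have hA : MeasurableSet {z : 𝕋2 | P z = 0} :=
    (isClosed_eq hPcont continuous_const).measurableSet
  set G : Finset ℤ := F.image Prod.snd with hG
  set d : 𝕋 → ℤ → ℂ := fun x k => ∑ n ∈ F.filter (fun n => n.2 = k), c n * fourier n.1 x with hd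
  have hsplit : ∀ x y : 𝕋, P (x, y) = ∑ k ∈ G, d x k * fourier k y := by
    intro x y
    have h1 : ∑ k ∈ G, ∑ n ∈ F.filter (fun n => n.2 = k), c n * char n (x, y)
        = ∑ n ∈ F.filter (fun n => n.2 ∈ G), c n * char n (x, y) :=
      Finset.sum_fiberwise_eq_sum_filter F G Prod.snd _
    have h2 : F.filter (fun n => n.2 ∈ G) = F := by
      apply Finset.filter_true_of_mem
      intro n hnF
      exact Finset.mem_image_of_mem _ hnF
    rw [hP]
    simp only
    rw [← h2, ← h1]
    refine Finset.sum_congr rfl fun k hkG => ?_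
    rw [hd]
    simp only
    rw [Finset.sum_mul]
    refine Finset.sum_congr rfl fun n hnf => ?_
    obtain ⟨hnF, hnk⟩ := Finset.mem_filter.mp hnf
    show c n * (fourier n.1 x * fourier n.2 y) = c n * fourier n.1 x * fourier k y
    rw [hnk]; ring
  set B : Set 𝕋 := {x | d x n₀.2 = 0} with hB
  have hBnull : volume B = 0 := by
    set S : Finset (ℤ × ℤ) := F.filter (fun n => n.2 = n₀.2) with hS
    have hinj : ∀ a ∈ S, ∀ b ∈ S, a.1 = b.1 → a = b := by
      intro a ha b hb hab
      obtain ⟨-, ha2⟩ := Finset.mem_filter.mp ha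
      obtain ⟨-, hb2⟩ := Finset.mem_filter.mp hb
      exact Prod.ext hab (ha2.trans hb2.symm)
    have hrw : ∀ x : 𝕋, d x n₀.2 = ∑ j ∈ S.image Prod.fst, c (j, n₀.2) * fourier j x := by
      intro x
      rw [Finset.sum_image hinj]
      refine Finset.sum_congr rfl fun n hnS => ?_
      obtain ⟨-, h2⟩ := Finset.mem_filter.mp hnS
      rw [show ((n.1, n₀.2) : ℤ × ℤ) = n from Prod.ext rfl h2.symm]
    have hmem : n₀.1 ∈ S.image Prod.fst :=
      Finset.mem_image_of_mem _ (Finset.mem_filter.mpr ⟨hn, rfl⟩)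
    have hc' : c (n₀.1, n₀.2) ≠ 0 := by simpa using hc
    have h0 := trig1d (S.image Prod.fst) (fun j => c (j, n₀.2)) n₀.1 hmem hc'
    refine measure_mono_null ?_ h0
    intro x hx
    simp only [Set.mem_setOf_eq] at hx ⊢
    rw [← hrw]; exact hx
  have hslice : ∀ x ∉ B, volume {y : 𝕋 | P (x, y) = 0} = 0 := by
    intro x hxB
    have hx : d x n₀.2 ≠ 0 := hxB
    have hmem : n₀.2 ∈ G := Finset.mem_image_of_mem _ hn
    refine measure_mono_null ?_ (trig1d G (d x) n₀.2 hmem hx)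
    intro y hy
    simp only [Set.mem_setOf_eq] at hy ⊢
    rw [← hsplit x y]; exact hy
  rw [show {z : 𝕋2 | ∑ n ∈ F, c n * char n z = 0} = {z : 𝕋2 | P z = 0} from rfl]
  rw [Measure.volume_eq_prod, Measure.prod_apply hA]
  have hae : ∀ᵐ x ∂(volume : Measure 𝕋), volume (Prod.mk x ⁻¹' {z : 𝕋2 | P z = 0}) = 0 := by
    have hBc : ∀ᵐ x ∂(volume : Measure 𝕋), x ∉ B := by
      rw [ae_iff]; simpa using hBnull
    filter_upwards [hBc] with x hx
    have := hslice x hx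
    convert this using 2
    rfl
  rw [lintegral_congr_ae hae, lintegral_zero]

theorem stmt2 (W : 𝕋2 → ℂ) (hW : MemLp W 4 volume) (hWpos : 0 < volume {z | W z ≠ 0}) :
    (∀ (lam : ℝ) (w : 𝕋2 → ℂ), MemLp w 2 volume → IsEig lam w →
        (∀ᵐ z ∂volume, W z * w z = 0) → w =ᵐ[volume] (0 : 𝕋2 → ℂ)) ∧
    (∀ N : Set (𝕋2 → ℂ),
      ((¬ ∀ u ∈ N, u =ᵐ[volume] (0 : 𝕋2 → ℂ)) →
        ∃ w ∈ N, ¬ w =ᵐ[volume] (0 : 𝕋2 → ℂ) ∧ MemLp w 2 volume ∧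
          (∃ lam, IsEig lam w) ∧ ∀ᵐ z ∂volume, W z * w z = 0) →
      ∀ u ∈ N, u =ᵐ[volume] (0 : 𝕋2 → ℂ)) := by
  classical
  have key : ∀ (lam : ℝ) (w : 𝕋2 → ℂ), MemLp w 2 volume → IsEig lam w →
      (∀ᵐ z ∂volume, W z * w z = 0) → w =ᵐ[volume] (0 : 𝕋2 → ℂ) := by
    intro lam w _ heig hWw
    obtain ⟨F, c, hFc, hae⟩ := heig
    rcases Finset.eq_empty_or_nonempty F with hF | ⟨n₀, hn₀⟩
    · filter_upwards [hae] with z hz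
      simpa [hF] using hz
    · exfalso
      have hc := (hFc n₀ hn₀).2
      have hA0 := trig2d F c n₀ hn₀ hc
      have haeSet :
          volume {z : 𝕋2 | ¬ (W z * w z = 0 ∧ w z = ∑ n ∈ F, c n * char n z)} = 0 := by
        have h := hWw.and hae
        rwa [ae_iff] at h
      have hsub : {z : 𝕋2 | W z ≠ 0} ⊆
          {z : 𝕋2 | ∑ n ∈ F, c n * char n z = 0} ∪
            {z : 𝕋2 | ¬ (W z * w z = 0 ∧ w z = ∑ n ∈ F, c n * char n z)} := by
        intro z hz
        by_cases hzN : W z * w z = 0 ∧ w z = ∑ n ∈ F, c n * char n z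
        · left
          obtain ⟨h1, h2⟩ := hzN
          rcases mul_eq_zero.mp h1 with h | h
          · exact absurd h hz
          · show ∑ n ∈ F, c n * char n z = 0
            rw [← h2]; exact h
        · right; exact hzN
      have h0 : volume {z : 𝕋2 | W z ≠ 0} = 0 :=
        measure_mono_null hsub (measure_union_null hA0 haeSet)
      rw [h0] at hWpos
      exact lt_irrefl _ hWpos
  refine ⟨key, ?_⟩
  intro N hN
  by_contra h
  obtain ⟨w, hwN, hw0, hw2, ⟨lam, heig⟩, hWw⟩ := hN h
  exact hw0 (key lam w hw2 heig hWw)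
end
end

section
/- Let ν̃ be a finite positive Borel measure on 𝕋² × S¹ that is invariant under the geodesic flow in the sense that ∫ A(z + sζ, ζ) dν̃(z,ζ) = ∫ A(z,ζ) dν̃(z,ζ) for all continuous A and all s ∈ ℝ. Suppose a_j ∈ C(𝕋²), a_j ≥ 0, and for each j, ∫ a_j(z) dν̃(z,ζ) ≤ C_j where C_j → 0. If the restriction of ν̃ to irrational directions W_∞ = {(z,ζ) : ζ ∉ ℚ·S¹} satisfies, via unique ergodicity, that the time averages ⟨a_j⟩_S(z,ζ) = (1/S)∫₀^S a_j(z+sζ)ds converge pointwise on W_∞ to the space average ⟨a_j⟩ = (2π)^{-2}∫ a_j dz as S → ∞, and ⟨a_j⟩ → ⟨a⟩ > 0, then ν̃(W_∞) = 0. -/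
open MeasureTheory Filter Topology
open scoped ENNReal

noncomputable section

/-- the unit circle of directions -/
abbrev Sph := Metric.sphere (0 : EuclideanSpace ℝ (Fin 2)) 1

/-- the geodesic (straight-line) flow on `𝕋² × S¹` -/
def geoFlow (s : ℝ) (p : 𝕋2 × Sph) : 𝕋2 × Sph :=
  ((p.1.1 + ((s * (p.2 : EuclideanSpace ℝ (Fin 2)) 0 : ℝ) : 𝕋),
    p.1.2 + ((s * (p.2 : EuclideanSpace ℝ (Fin 2)) 1 : ℝ) : 𝕋)), p.2)

/-- the set of irrational directions -/
def Winf : Set (𝕋2 × Sph) :=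
  {p | ¬ ∃ k : ℤ × ℤ, k ≠ 0 ∧ ∃ t : ℝ,
    (p.2 : EuclideanSpace ℝ (Fin 2)) 0 = t * k.1 ∧ (p.2 : EuclideanSpace ℝ (Fin 2)) 1 = t * k.2}

lemma continuous_coord (i : Fin 2) :
    Continuous (fun p : 𝕋2 × Sph => ((p.2 : EuclideanSpace ℝ (Fin 2)) i)) :=
  (continuous_apply i).comp ((PiLp.continuous_ofLp (p := 2) (β := fun _ : Fin 2 => ℝ)).comp (continuous_subtype_val.comp continuous_snd))

lemma continuous_geoFlow : Continuous (fun q : (𝕋2 × Sph) × ℝ => geoFlow q.2 q.1) := by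
  unfold geoFlow
  have hc : Continuous (fun x : ℝ => (x : 𝕋)) := continuous_quotient_mk'
  have h1 : Continuous (fun q : (𝕋2 × Sph) × ℝ => q.1.1.1) :=
    continuous_fst.comp (continuous_fst.comp continuous_fst)
  have h2 : Continuous (fun q : (𝕋2 × Sph) × ℝ => q.1.1.2) :=
    continuous_snd.comp (continuous_fst.comp continuous_fst)
  have h3 : ∀ i : Fin 2, Continuous (fun q : (𝕋2 × Sph) × ℝ =>
      q.2 * (q.1.2 : EuclideanSpace ℝ (Fin 2)) i) :=
    fun i => continuous_snd.mul ((continuous_coord i).comp continuous_fst)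
  exact Continuous.prodMk
    (Continuous.prodMk (h1.add (hc.comp (h3 0))) (h2.add (hc.comp (h3 1))))
    (continuous_snd.comp continuous_fst)

lemma measurable_Winf : MeasurableSet Winf := by
  have hrw : Winf = (⋃ k : ℤ × ℤ, {p : 𝕋2 × Sph | k ≠ 0 ∧ ∃ t : ℝ,
      (p.2 : EuclideanSpace ℝ (Fin 2)) 0 = t * k.1 ∧
      (p.2 : EuclideanSpace ℝ (Fin 2)) 1 = t * k.2})ᶜ := by
    ext p; simp [Winf]
  rw [hrw]
  refine (MeasurableSet.iUnion fun k => ?_).compl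
  rcases eq_or_ne k 0 with rfl | hk
  · simp
  · have hor : (k.1 : ℝ) ≠ 0 ∨ (k.2 : ℝ) ≠ 0 := by
      rcases k with ⟨k1, k2⟩
      have : k1 ≠ 0 ∨ k2 ≠ 0 := by
        by_contra hcon
        push_neg at hcon
        exact hk (by simp [Prod.ext_iff, hcon.1, hcon.2])
      exact this.imp (fun h => Int.cast_ne_zero.mpr h) (fun h => Int.cast_ne_zero.mpr h)
    have hset : {p : 𝕋2 × Sph | k ≠ 0 ∧ ∃ t : ℝ,
        (p.2 : EuclideanSpace ℝ (Fin 2)) 0 = t * k.1 ∧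
        (p.2 : EuclideanSpace ℝ (Fin 2)) 1 = t * k.2}
        = {p : 𝕋2 × Sph | (k.2 : ℝ) * (p.2 : EuclideanSpace ℝ (Fin 2)) 0
            = (k.1 : ℝ) * (p.2 : EuclideanSpace ℝ (Fin 2)) 1} := by
      ext p
      simp only [Set.mem_setOf_eq, hk, ne_eq, not_false_iff, true_and]
      constructor
      · rintro ⟨t, h0, h1⟩; rw [h0, h1]; ring
      · intro h
        rcases hor with h1 | h2
        · refine ⟨(p.2 : EuclideanSpace ℝ (Fin 2)) 0 / k.1, by field_simp, ?_⟩
          field_simp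
          linarith [h]
        · refine ⟨(p.2 : EuclideanSpace ℝ (Fin 2)) 1 / k.2, ?_, by field_simp⟩
          field_simp
          linarith [h]
    rw [hset]
    exact (isClosed_eq (continuous_const.mul (continuous_coord 0))
      (continuous_const.mul (continuous_coord 1))).measurableSet

/-- if a finite flow-invariant measure `ν̃` on `𝕋² × S¹` satisfies
`∫ a_j dν̃ ≤ C_j → 0` for continuous `a_j ≥ 0` whose Birkhoff averages converge on the
irrational directions to means `⟨a_j⟩ → ⟨a⟩ > 0`, then `ν̃(W_∞) = 0`. -/
theorem stmt8 (ν : Measure (𝕋2 × Sph)) [IsFiniteMeasure ν]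
    (hinv : ∀ s : ℝ, ∀ A : 𝕋2 × Sph → ℝ, Continuous A →
      (∫ p, A (geoFlow s p) ∂ν) = ∫ p, A p ∂ν)
    (a : ℕ → 𝕋2 → ℝ) (hacont : ∀ j, Continuous (a j)) (ha0 : ∀ j z, 0 ≤ a j z)
    (C : ℕ → ℝ) (hbound : ∀ j, (∫ p, a j p.1 ∂ν) ≤ C j)
    (hC : Tendsto C atTop (nhds 0))
    (hbirk : ∀ j, ∀ p ∈ Winf,
      Tendsto (fun S : ℝ => (1 / S) * ∫ s in Set.Ioc (0 : ℝ) S, a j (geoFlow s p).1)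
        atTop (nhds (((2 * Real.pi) ^ 2)⁻¹ * ∫ z, a j z)))
    (L : ℝ) (hL : 0 < L)
    (hmean : Tendsto (fun j => ((2 * Real.pi) ^ 2)⁻¹ * ∫ z, a j z) atTop (nhds L)) :
    ν Winf = 0 := by
  classical
  set m : ℕ → ℝ := fun j => ((2 * Real.pi) ^ 2)⁻¹ * ∫ z, a j z with hm
  have hflowcont : ∀ j, Continuous (fun q : (𝕋2 × Sph) × ℝ => a j ((geoFlow q.2 q.1).1)) :=
    fun j => (hacont j).comp (continuous_fst.comp continuous_geoFlow)
  have hcont_s : ∀ j s, Continuous (fun p : 𝕋2 × Sph => a j ((geoFlow s p).1)) :=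
    fun j s => (hflowcont j).comp (continuous_id.prodMk continuous_const)
  have hcont_p : ∀ j (p : 𝕋2 × Sph), Continuous (fun s : ℝ => a j ((geoFlow s p).1)) :=
    fun j p => (hflowcont j).comp (continuous_const.prodMk continuous_id)
  have hint : ∀ (g : 𝕋2 × Sph → ℝ), Continuous g → Integrable g ν :=
    fun g hg => hg.integrable_of_hasCompactSupport (HasCompactSupport.of_compactSpace g)
  have hint1 : ∀ j, Integrable (fun p : 𝕋2 × Sph => a j p.1) ν :=
    fun j => hint _ ((hacont j).comp continuous_fst)
  have hint2 : ∀ j s, Integrable (fun p : 𝕋2 × Sph => a j ((geoFlow s p).1)) ν :=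
    fun j s => hint _ (hcont_s j s)
  set I : ℕ → ℝ≥0∞ := fun j => ∫⁻ p, ENNReal.ofReal (a j p.1) ∂ν with hI
  have hIle : ∀ j, I j ≤ ENNReal.ofReal (C j) := by
    intro j
    have h1 : I j = ENNReal.ofReal (∫ p, a j p.1 ∂ν) :=
      (MeasureTheory.ofReal_integral_eq_lintegral_ofReal (hint1 j)
        (Filter.Eventually.of_forall fun p => ha0 j p.1)).symm
    rw [h1]; exact ENNReal.ofReal_le_ofReal (hbound j)
  have hinvL : ∀ j s, (∫⁻ p, ENNReal.ofReal (a j ((geoFlow s p).1)) ∂ν) = I j := by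
    intro j s
    calc (∫⁻ p, ENNReal.ofReal (a j ((geoFlow s p).1)) ∂ν)
        = ENNReal.ofReal (∫ p, a j ((geoFlow s p).1) ∂ν) :=
          (MeasureTheory.ofReal_integral_eq_lintegral_ofReal (hint2 j s)
            (Filter.Eventually.of_forall fun p => ha0 j _)).symm
      _ = ENNReal.ofReal (∫ p, a j p.1 ∂ν) :=
          congrArg ENNReal.ofReal
            (hinv s (fun p => a j p.1) ((hacont j).comp continuous_fst))
      _ = I j :=
          MeasureTheory.ofReal_integral_eq_lintegral_ofReal (hint1 j)
            (Filter.Eventually.of_forall fun p => ha0 j _)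
  -- the averaged functions
  set h : ℕ → ℕ → 𝕋2 × Sph → ℝ≥0∞ := fun j n p =>
    (n : ℝ≥0∞)⁻¹ * ∫⁻ s in Set.Ioc (0:ℝ) n, ENNReal.ofReal (a j ((geoFlow s p).1)) with hh
  have hFmeas : ∀ j, Measurable (fun q : (𝕋2 × Sph) × ℝ =>
      ENNReal.ofReal (a j ((geoFlow q.2 q.1).1))) :=
    fun j => (ENNReal.continuous_ofReal.comp (hflowcont j)).measurable
  have hmeas : ∀ j n, Measurable (h j n) := by
    intro j n
    exact ((hFmeas j).lintegral_prod_right').const_mul _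
  have hkey : ∀ j, ENNReal.ofReal (m j) * ν Winf ≤ ENNReal.ofReal (C j) := by
    intro j
    -- bound on the integral of h j n over Winf
    have hhle : ∀ n : ℕ, 1 ≤ n → (∫⁻ p in Winf, h j n p ∂ν) ≤ ENNReal.ofReal (C j) := by
      intro n hn
      refine le_trans (setLIntegral_le_lintegral _ _) ?_
      have hswap : (∫⁻ p, ∫⁻ s in Set.Ioc (0:ℝ) n,
            ENNReal.ofReal (a j ((geoFlow s p).1)) ∂volume ∂ν)
          = ∫⁻ s in Set.Ioc (0:ℝ) n,
            ∫⁻ p, ENNReal.ofReal (a j ((geoFlow s p).1)) ∂ν ∂volume :=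
        lintegral_lintegral_swap ((hFmeas j).aemeasurable)
      have hconst : (∫⁻ s in Set.Ioc (0:ℝ) n,
            ∫⁻ p, ENNReal.ofReal (a j ((geoFlow s p).1)) ∂ν ∂volume)
          = I j * ENNReal.ofReal n := by
        calc (∫⁻ s in Set.Ioc (0:ℝ) n,
              ∫⁻ p, ENNReal.ofReal (a j ((geoFlow s p).1)) ∂ν ∂volume)
            = ∫⁻ _ in Set.Ioc (0:ℝ) n, I j ∂volume := by
              refine setLIntegral_congr_fun measurableSet_Ioc ?_
              exact fun s _ => hinvL j s
          _ = I j * ENNReal.ofReal n := by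
              rw [setLIntegral_const, Real.volume_Ioc, sub_zero]
      have hn0 : ((n : ℝ≥0∞)) ≠ 0 := Nat.cast_ne_zero.mpr (Nat.one_le_iff_ne_zero.mp hn)
      calc (∫⁻ p, h j n p ∂ν)
          = (n : ℝ≥0∞)⁻¹ * ∫⁻ p, ∫⁻ s in Set.Ioc (0:ℝ) n,
              ENNReal.ofReal (a j ((geoFlow s p).1)) ∂volume ∂ν := by
            rw [hh]
            exact lintegral_const_mul' _ _ (ENNReal.inv_ne_top.mpr hn0)
        _ = (n : ℝ≥0∞)⁻¹ * (I j * ENNReal.ofReal n) := by rw [hswap, hconst]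
        _ = I j * ((n : ℝ≥0∞) * (n : ℝ≥0∞)⁻¹) := by
            rw [ENNReal.ofReal_natCast]; ring
        _ = I j := by rw [ENNReal.mul_inv_cancel hn0 (by simp), mul_one]
        _ ≤ ENNReal.ofReal (C j) := hIle j
    -- pointwise convergence on Winf
    have hptw : ∀ p ∈ Winf,
        Tendsto (fun n : ℕ => h j n p) atTop (𝓝 (ENNReal.ofReal (m j))) := by
      intro p hp
      have hb : Tendsto (fun n : ℕ =>
          (1 / (n:ℝ)) * ∫ s in Set.Ioc (0:ℝ) n, a j ((geoFlow s p).1)) atTop (𝓝 (m j)) :=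
        (hbirk j p hp).comp tendsto_natCast_atTop_atTop
      refine (ENNReal.tendsto_ofReal hb).congr' ?_
      filter_upwards [eventually_ge_atTop 1] with n hn
      have hnpos : (0:ℝ) < n := by exact_mod_cast Nat.pos_of_ne_zero (by omega)
      rw [ENNReal.ofReal_mul (by positivity)]
      congr 1
      · rw [one_div, ENNReal.ofReal_inv_of_pos hnpos, ENNReal.ofReal_natCast]
      · exact MeasureTheory.ofReal_integral_eq_lintegral_ofReal
          ((hcont_p j p).integrableOn_Ioc)
          (Filter.Eventually.of_forall fun s => ha0 j _)
    -- Fatou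
    have fatou := lintegral_liminf_le (μ := ν.restrict Winf) (u := (atTop : Filter ℕ)) (fun n => hmeas j n)
    have hLHS : (∫⁻ p in Winf, Filter.liminf (fun n : ℕ => h j n p) atTop ∂ν)
        = ENNReal.ofReal (m j) * ν Winf := by
      rw [setLIntegral_congr_fun measurable_Winf
        (fun p hp => (hptw p hp).liminf_eq),
        setLIntegral_const]
    have hRHS : Filter.liminf (fun n : ℕ => ∫⁻ p in Winf, h j n p ∂ν) atTop
        ≤ ENNReal.ofReal (C j) := by
      have hev : ∀ᶠ n : ℕ in atTop, (∫⁻ p in Winf, h j n p ∂ν) ≤ ENNReal.ofReal (C j) := by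
        filter_upwards [eventually_ge_atTop 1] with n hn
        exact hhle n hn
      exact liminf_le_of_frequently_le' hev.frequently
    calc ENNReal.ofReal (m j) * ν Winf
        = ∫⁻ p in Winf, Filter.liminf (fun n : ℕ => h j n p) atTop ∂ν := hLHS.symm
      _ ≤ Filter.liminf (fun n : ℕ => ∫⁻ p in Winf, h j n p ∂ν) atTop := fatou
      _ ≤ ENNReal.ofReal (C j) := hRHS
  -- pass to the limit in j
  have h1 : Tendsto (fun j => ENNReal.ofReal (m j) * ν Winf) atTop
      (𝓝 (ENNReal.ofReal L * ν Winf)) :=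
    ENNReal.Tendsto.mul_const (ENNReal.tendsto_ofReal hmean)
      (Or.inr (measure_ne_top ν _))
  have h2 : Tendsto (fun j => ENNReal.ofReal (C j)) atTop (𝓝 0) := by
    simpa using ENNReal.tendsto_ofReal hC
  have h3 : ENNReal.ofReal L * ν Winf ≤ 0 := le_of_tendsto_of_tendsto' h1 h2 hkey
  have h4 : ENNReal.ofReal L * ν Winf = 0 := le_antisymm h3 (by simp)
  rcases mul_eq_zero.mp h4 with h5 | h5
  · exact absurd h5 (by simp [ENNReal.ofReal_eq_zero, not_le, hL])
  · exact h5
end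
end
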